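/- There exists a subset A of ℤ^d which is an additive IP* set (meets every set of finite sums FS((x_n)) of an infinite sequence of nonzero elements) but such that A \ {0} is not multiplicatively syndetic with respect to any proper multiplication on ℤ^d. -/

import Mathlib

/-- A proper multiplication on ℤ^d: a biadditive associative operation making
(ℤ^d, +, ∗) a ring without zero divisors. -/
structure ProperMult (d : ℕ) where
  mul : (Fin d → ℤ) → (Fin d → ℤ) → (Fin d → ℤ)
  add_left : ∀ x y z, mul (x + y) z = mul x z + mul y z
  add_right : ∀ x y z, mul x (y + z) = mul x y + mul x z
  assoc : ∀ x y z, mul (mul x y) z = mul x (mul y z)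
  no_zero_divisors : ∀ x y, mul x y = 0 → x = 0 ∨ y = 0

/-- B is multiplicatively (right) syndetic with respect to P in (ℤ^d\{0}, ∗). -/
def SyndM {d : ℕ} (P : ProperMult d) (B : Set (Fin d → ℤ)) : Prop :=
  ∃ F : Finset (Fin d → ℤ), (∀ s ∈ F, s ≠ 0) ∧
    ∀ x : Fin d → ℤ, x ≠ 0 → ∃ s ∈ F, P.mul s x ∈ B



namespace Scratch
variable {d : ℕ}

def nu (x : Fin d → ℤ) : ℕ := Finset.univ.sup fun i => (x i).natAbs

lemma le_nu (x : Fin d → ℤ) (i : Fin d) : (x i).natAbs ≤ nu x :=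
  Finset.le_sup (f := fun i => (x i).natAbs) (Finset.mem_univ i)

lemma nu_le {x : Fin d → ℤ} {m : ℕ} (h : ∀ i, (x i).natAbs ≤ m) : nu x ≤ m :=
  Finset.sup_le fun i _ => h i

lemma nu_add_le (x y : Fin d → ℤ) : nu (x + y) ≤ nu x + nu y :=
  nu_le fun i => le_trans (Int.natAbs_add_le _ _) (add_le_add (le_nu x i) (le_nu y i))

lemma nu_sub_le (x y : Fin d → ℤ) : nu (x - y) ≤ nu x + nu y :=
  nu_le fun i => le_trans (Int.natAbs_sub_le _ _) (add_le_add (le_nu x i) (le_nu y i))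

lemma nu_nsmul_ge {x : Fin d → ℤ} (hx : x ≠ 0) (n : ℕ) : n ≤ nu (n • x) := by
  obtain ⟨i, hi⟩ := Function.ne_iff.mp hx
  have h1 : 1 ≤ (x i).natAbs := Int.natAbs_pos.mpr hi
  have h2 : ((n • x) i).natAbs = n * (x i).natAbs := by
    simp [Int.natAbs_mul]
  calc n = n * 1 := (mul_one n).symm
    _ ≤ n * (x i).natAbs := Nat.mul_le_mul_left n h1
    _ = ((n • x) i).natAbs := h2.symm
    _ ≤ nu (n • x) := le_nu _ i

lemma pmul_zero_left (P : ProperMult d) (x : Fin d → ℤ) : P.mul 0 x = 0 := by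
  have h := P.add_left 0 0 x
  rw [add_zero] at h
  exact (left_eq_add.mp h)

lemma pmul_zero_right (P : ProperMult d) (x : Fin d → ℤ) : P.mul x 0 = 0 := by
  have h := P.add_right x 0 0
  rw [add_zero] at h
  exact (left_eq_add.mp h)

lemma pmul_sub_left (P : ProperMult d) (a b x : Fin d → ℤ) :
    P.mul (a - b) x = P.mul a x - P.mul b x := by
  have h := P.add_left (a - b) b x
  rw [sub_add_cancel] at h
  exact eq_sub_of_add_eq h.symm

lemma pmul_nsmul_right (P : ProperMult d) (s x : Fin d → ℤ) (n : ℕ) :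
    P.mul s (n • x) = n • P.mul s x := by
  induction n with
  | zero => simpa using pmul_zero_right P s
  | succ n ih => rw [succ_nsmul, succ_nsmul, P.add_right, ih]

lemma pmul_ne_zero (P : ProperMult d) {s x : Fin d → ℤ} (hs : s ≠ 0) (hx : x ≠ 0) :
    P.mul s x ≠ 0 := fun h => by rcases P.no_zero_divisors s x h with h'|h' <;> tauto

/-- the key choice lemma: a block far from everything previous -/
lemma exists_x (hd : 0 < d) (P : ProperMult d) (F : Finset (Fin d → ℤ)) (M : ℕ) :
    ∃ x : Fin d → ℤ, x ≠ 0 ∧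
      (∀ s ∈ F, s ≠ 0 → 2 * M < nu (P.mul s x)) ∧
      (∀ s ∈ F, ∀ s' ∈ F, s ≠ s' → M < nu (P.mul s x - P.mul s' x)) := by
  set o : Fin d → ℤ := fun _ => 1 with ho
  have hone : o ≠ 0 := by
    intro h
    have := congrFun h ⟨0, hd⟩
    simp [ho] at this
  refine ⟨(2 * M + 1) • o, ?_, ?_, ?_⟩
  · intro h
    have := congrFun h ⟨0, hd⟩
    simp [ho] at this
    omega
  · intro s _ hs
    have h1 : P.mul s ((2 * M + 1) • o) = (2 * M + 1) • P.mul s o :=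
      pmul_nsmul_right P s o (2 * M + 1)
    have h2 : P.mul s o ≠ 0 := pmul_ne_zero P hs hone
    have := nu_nsmul_ge h2 (2 * M + 1)
    rw [h1]; omega
  · intro s _ s' _ hss
    have hsub : P.mul s ((2*M+1) • o) - P.mul s' ((2*M+1) • o)
        = (2*M+1) • P.mul (s - s') o := by
      rw [← pmul_sub_left, pmul_nsmul_right]
    have h2 : P.mul (s - s') o ≠ 0 := pmul_ne_zero P (sub_ne_zero.mpr hss) hone
    have := nu_nsmul_ge h2 (2 * M + 1)
    rw [hsub]; omega

/-- the chosen scale for step n -/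
noncomputable def xch (hd : 0 < d) (e : ℕ → ProperMult d × Finset (Fin d → ℤ))
    (G : Finset (Fin d → ℤ)) (n : ℕ) : Fin d → ℤ :=
  (exists_x hd (e n).1 (e n).2 (G.sup nu)).choose

/-- the accumulated finite sets -/
noncomputable def gS (hd : 0 < d) (e : ℕ → ProperMult d × Finset (Fin d → ℤ)) :
    ℕ → Finset (Fin d → ℤ)
  | 0 => ∅
  | n + 1 =>
      gS hd e n ∪
        ((e n).2.filter (fun s => s ≠ 0)).image
          (fun s => (e n).1.mul s (xch hd e (gS hd e n) n))

lemma gS_succ (hd : 0 < d) (e : ℕ → ProperMult d × Finset (Fin d → ℤ)) (n : ℕ) :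
    gS hd e (n + 1) = gS hd e n ∪
        ((e n).2.filter (fun s => s ≠ 0)).image
          (fun s => (e n).1.mul s (xch hd e (gS hd e n) n)) := rfl

lemma gS_mono (hd : 0 < d) (e : ℕ → ProperMult d × Finset (Fin d → ℤ)) {n m : ℕ}
    (h : n ≤ m) : gS hd e n ⊆ gS hd e m := by
  induction m with
  | zero => simpa [Nat.le_zero.mp h] using Finset.Subset.refl _
  | succ m ih =>
    rcases Nat.lt_or_ge n (m+1) with h'|h'
    · exact (ih (by omega)).trans (by rw [gS_succ]; exact Finset.subset_union_left)
    · have : n = m + 1 := by omega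
      subst this; exact Finset.Subset.refl _

lemma zero_not_mem_gS (hd : 0 < d) (e : ℕ → ProperMult d × Finset (Fin d → ℤ)) (n : ℕ) :
    (0 : Fin d → ℤ) ∉ gS hd e n := by
  induction n with
  | zero => simp [gS]
  | succ n ih =>
    rw [gS_succ, Finset.mem_union]
    rintro (h | h)
    · exact ih h
    · obtain ⟨s, hs, hs0⟩ := Finset.mem_image.mp h
      obtain ⟨hsF, hsne⟩ := Finset.mem_filter.mp hs
      have hx := (exists_x hd (e n).1 (e n).2 ((gS hd e n).sup nu)).choose_spec
      exact pmul_ne_zero (e n).1 hsne hx.1 hs0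

lemma new_large (hd : 0 < d) (e : ℕ → ProperMult d × Finset (Fin d → ℤ)) {n : ℕ}
    {y : Fin d → ℤ} (h1 : y ∈ gS hd e (n+1)) (h2 : y ∉ gS hd e n) :
    2 * (gS hd e n).sup nu < nu y := by
  rw [gS_succ, Finset.mem_union] at h1
  rcases h1 with h | h
  · exact absurd h h2
  · obtain ⟨s, hs, hs0⟩ := Finset.mem_image.mp h
    obtain ⟨hsF, hsne⟩ := Finset.mem_filter.mp hs
    have hx := (exists_x hd (e n).1 (e n).2 ((gS hd e n).sup nu)).choose_spec
    rw [← hs0]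
    exact hx.2.1 s hsF hsne

lemma diff_large (hd : 0 < d) (e : ℕ → ProperMult d × Finset (Fin d → ℤ)) {n : ℕ}
    {u v : Fin d → ℤ} (hu1 : u ∈ gS hd e (n+1)) (hu2 : u ∉ gS hd e n)
    (hv1 : v ∈ gS hd e (n+1)) (hv2 : v ∉ gS hd e n) (huv : u ≠ v) :
    (gS hd e n).sup nu < nu (u - v) := by
  rw [gS_succ, Finset.mem_union] at hu1 hv1
  rcases hu1 with h | h; · exact absurd h hu2
  rcases hv1 with h' | h'; · exact absurd h' hv2
  obtain ⟨s, hs, hs0⟩ := Finset.mem_image.mp h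
  obtain ⟨s', hs', hs0'⟩ := Finset.mem_image.mp h'
  obtain ⟨hsF, _⟩ := Finset.mem_filter.mp hs
  obtain ⟨hsF', _⟩ := Finset.mem_filter.mp hs'
  have hx := (exists_x hd (e n).1 (e n).2 ((gS hd e n).sup nu)).choose_spec
  have hss : s ≠ s' := by rintro rfl; exact huv (hs0 ▸ hs0' ▸ rfl)
  rw [← hs0, ← hs0']
  exact hx.2.2 s hsF s' hsF' hss

lemma nu_le_sup (hd : 0 < d) (e : ℕ → ProperMult d × Finset (Fin d → ℤ)) {n : ℕ}
    {y : Fin d → ℤ} (h : y ∈ gS hd e n) : nu y ≤ (gS hd e n).sup nu :=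
  Finset.le_sup h

lemma sup_mono (hd : 0 < d) (e : ℕ → ProperMult d × Finset (Fin d → ℤ)) {n m : ℕ}
    (h : n ≤ m) : (gS hd e n).sup nu ≤ (gS hd e m).sup nu :=
  Finset.sup_mono (gS_mono hd e h)

/-- the central separation lemma: a sum of elements of two distinct blocks is never in D -/
lemma key (hd : 0 < d) (e : ℕ → ProperMult d × Finset (Fin d → ℤ)) {a b c : ℕ}
    {u v w : Fin d → ℤ}
    (hu1 : u ∈ gS hd e (a+1)) (hu2 : u ∉ gS hd e a)
    (hv1 : v ∈ gS hd e (b+1)) (hv2 : v ∉ gS hd e b)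
    (hw1 : w ∈ gS hd e (c+1)) (hw2 : w ∉ gS hd e c)
    (hab : a < b) (heq : u + v = w) : False := by
  have hnu_u : nu u ≤ (gS hd e (a+1)).sup nu := nu_le_sup hd e hu1
  rcases lt_trichotomy b c with h | h | h
  · -- b < c : w is too big
    have h1 : 2 * (gS hd e c).sup nu < nu w := new_large hd e hw1 hw2
    have h2 : nu w ≤ nu u + nu v := heq ▸ nu_add_le u v
    have h3 : nu u ≤ (gS hd e c).sup nu :=
      hnu_u.trans (sup_mono hd e (by omega))
    have h4 : nu v ≤ (gS hd e c).sup nu :=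
      (nu_le_sup hd e hv1).trans (sup_mono hd e (by omega))
    omega
  · -- b = c : u = w - v is a small difference of block-b elements
    subst h
    have hvw : v ≠ w := by
      rintro rfl
      have hu0 : u = 0 := by
        have h' : u + v = v := heq
        simpa using add_eq_right.mp h'
      exact (zero_not_mem_gS hd e (a+1)) (hu0 ▸ hu1)
    have h1 : (gS hd e b).sup nu < nu (w - v) := diff_large hd e hw1 hw2 hv1 hv2 (Ne.symm hvw)
    have h2 : w - v = u := by rw [← heq]; abel
    have h3 : nu u ≤ (gS hd e b).sup nu := hnu_u.trans (sup_mono hd e (by omega))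
    rw [h2] at h1; omega
  · -- c < b : v = w - u is too big
    have h1 : 2 * (gS hd e b).sup nu < nu v := new_large hd e hv1 hv2
    have h2 : v = w - u := by rw [← heq]; abel
    have h3 : nu v ≤ nu w + nu u := h2 ▸ nu_sub_le w u
    have h4 : nu w ≤ (gS hd e b).sup nu :=
      (nu_le_sup hd e hw1).trans (sup_mono hd e (by omega))
    have h5 : nu u ≤ (gS hd e b).sup nu := hnu_u.trans (sup_mono hd e (by omega))
    omega


/-- biadditive hom packaging -/

def lhom (P : ProperMult d) (y : Fin d → ℤ) : (Fin d → ℤ) →+ (Fin d → ℤ) where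
  toFun x := P.mul x y
  map_zero' := pmul_zero_left P y
  map_add' a b := P.add_left a b y

def rhom (P : ProperMult d) (x : Fin d → ℤ) : (Fin d → ℤ) →+ (Fin d → ℤ) where
  toFun y := P.mul x y
  map_zero' := pmul_zero_right P x
  map_add' a b := P.add_right x a b


noncomputable instance : Countable (ProperMult d) := by
  have key : ∀ P Q : ProperMult d,
      (∀ i j : Fin d, P.mul (fun k => if i = k then 1 else 0) (fun k => if j = k then 1 else 0)
        = Q.mul (fun k => if i = k then 1 else 0) (fun k => if j = k then 1 else 0)) →
      P.mul = Q.mul := by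
    intro P Q h
    funext x y
    have hx := pi_eq_sum_univ x
    have hy := pi_eq_sum_univ y
    have expand : ∀ R : ProperMult d, R.mul x y =
        ∑ i : Fin d, (x i) • ∑ j : Fin d, (y j) •
          R.mul (fun k => if i = k then 1 else 0) (fun k => if j = k then 1 else 0) := by
      intro R
      conv_lhs => rw [hx]
      rw [show R.mul (∑ i : Fin d, (x i) • fun j => if i = j then (1:ℤ) else 0) y
            = lhom R y (∑ i : Fin d, (x i) • fun j => if i = j then (1:ℤ) else 0) from rfl]
      rw [map_sum]
      refine Finset.sum_congr rfl fun i _ => ?_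
      rw [map_zsmul]
      congr 1
      show R.mul _ y = _
      conv_lhs => rw [hy]
      rw [show R.mul (fun k => if i = k then (1:ℤ) else 0)
              (∑ j : Fin d, (y j) • fun k => if j = k then (1:ℤ) else 0)
            = rhom R (fun k => if i = k then (1:ℤ) else 0)
              (∑ j : Fin d, (y j) • fun k => if j = k then (1:ℤ) else 0) from rfl]
      rw [map_sum]
      refine Finset.sum_congr rfl fun j _ => ?_
      rw [map_zsmul]
      rfl
    rw [expand P, expand Q]
    simp_rw [h]
  have hinj : Function.Injective (fun P : ProperMult d =>
      fun i j : Fin d => P.mul (fun k => if i = k then 1 else 0) (fun k => if j = k then 1 else 0)) := by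
    intro P Q h
    have hm : P.mul = Q.mul := key P Q fun i j => congrFun (congrFun h i) j
    cases P; cases Q
    simpa using hm
  exact Function.Injective.countable hinj


lemma exists_block (hd : 0 < d) (e : ℕ → ProperMult d × Finset (Fin d → ℤ))
    {y : Fin d → ℤ} (hy : ∃ n, y ∈ gS hd e n) :
    ∃ b, y ∈ gS hd e (b+1) ∧ y ∉ gS hd e b := by
  classical
  have hfind := Nat.find_spec hy
  have hne : Nat.find hy ≠ 0 := by
    intro h
    rw [h] at hfind
    simpa [gS] using hfind
  obtain ⟨m, hm⟩ := Nat.exists_eq_succ_of_ne_zero hne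
  rw [hm] at hfind
  refine ⟨m, hfind, fun h => ?_⟩
  exact Nat.find_min hy (by omega) h

end Scratch


open Scratch

/-- There is an additive IP* subset A of ℤ^d (A meets every set of finite sums
of a sequence of nonzero vectors) such that A \ {0} is not multiplicatively
syndetic with respect to any proper multiplication on ℤ^d. -/
theorem exists_addIPstar_not_mult_syndetic {d : ℕ} (hd : 0 < d) :
    ∃ A : Set (Fin d → ℤ),
      (∀ x : ℕ → (Fin d → ℤ), (∀ n, x n ≠ 0) →
        ∃ I : Finset ℕ, I.Nonempty ∧ (∑ i ∈ I, x i) ∈ A) ∧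
      ∀ P : ProperMult d, ¬ SyndM P (A \ {0}) := by
  classical
  rcases isEmpty_or_nonempty (ProperMult d) with hE | hE
  · exact ⟨Set.univ, fun x hx => ⟨{0}, Finset.singleton_nonempty 0, trivial⟩,
      fun P => (hE.false P).elim⟩
  obtain ⟨e, he⟩ := exists_surjective_nat (ProperMult d × Finset (Fin d → ℤ))
  set D : Set (Fin d → ℤ) := {y | ∃ n, y ∈ gS hd e n} with hDdef
  refine ⟨Dᶜ, ?_, ?_⟩
  · -- IP* property
    intro x hx
    by_contra hcon
    push_neg at hcon
    have hD : ∀ I : Finset ℕ, I.Nonempty → (∑ i ∈ I, x i) ∈ D := by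
      intro I hI
      have := hcon I hI
      simpa using this
    have h0D : (0 : Fin d → ℤ) ∉ D := by
      rintro ⟨n, hn⟩
      exact zero_not_mem_gS hd e n hn
    have hsum0 : ∀ I : Finset ℕ, I.Nonempty → (∑ i ∈ I, x i) ≠ 0 := by
      intro I hI h
      exact h0D (h ▸ hD I hI)
    -- u = x 0
    have hu : x 0 ∈ D := by
      have := hD {0} (Finset.singleton_nonempty 0)
      simpa using this
    obtain ⟨a, hu1, hu2⟩ := exists_block hd e hu
    -- tail partial sums
    set T : ℕ → (Fin d → ℤ) := fun n => ∑ i ∈ Finset.range n, x (i+1) with hT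
    have hTsum : ∀ n, T n = ∑ i ∈ (Finset.range n).image (· + 1), x i := by
      intro n
      rw [Finset.sum_image (by intro a _ b _ h; simp only at h; omega)]
    have hTD : ∀ n, 1 ≤ n → T n ∈ D := by
      intro n hn
      rw [hTsum]
      exact hD _ (by simpa [Finset.image_nonempty, Finset.nonempty_range_iff] using by omega)
    have hTinj : ∀ m n, m < n → T m ≠ T n := by
      intro m n hmn hEq
      have hIco : ∑ i ∈ Finset.Ico m n, x (i+1) = 0 := by
        rw [Finset.sum_Ico_eq_sub _ (le_of_lt hmn),
          show (∑ k ∈ Finset.range n, x (k+1)) = ∑ k ∈ Finset.range m, x (k+1) from hEq.symm,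
          sub_self]
      have : ∑ i ∈ (Finset.Ico m n).image (· + 1), x i = 0 := by
        rw [Finset.sum_image (by intro a _ b _ h; simp only at h; omega)]
        exact hIco
      exact hsum0 _ (by simpa [Finset.image_nonempty] using hmn) this
    -- find a tail sum outside gS (a+1)
    have hex : ∃ n, 1 ≤ n ∧ T n ∉ gS hd e (a+1) := by
      by_contra hcon2
      push_neg at hcon2
      have hmap : ∀ n : ℕ, T (n+1) ∈ gS hd e (a+1) := fun n => hcon2 (n+1) (by omega)
      have hinj : Function.Injective (fun n => T (n+1)) := by
        intro m n h
        by_contra hne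
        rcases Nat.lt_or_ge m n with h'|h'
        · exact hTinj (m+1) (n+1) (by omega) h
        · exact hTinj (n+1) (m+1) (by omega) h.symm
      have hfin : (Set.range fun n => T (n+1)).Finite :=
        Set.Finite.subset (gS hd e (a+1)).finite_toSet (by rintro y ⟨n, rfl⟩; exact hmap n)
      exact (Set.infinite_range_of_injective hinj) hfin
    obtain ⟨n, hn1, hTn⟩ := hex
    have hv : T n ∈ D := hTD n hn1
    obtain ⟨b, hv1, hv2⟩ := exists_block hd e hv
    have hab : a < b := by
      by_contra h
      push_neg at h
      exact hTn (gS_mono hd e (by omega) hv1)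
    -- w = x 0 + T n
    have hw : x 0 + T n ∈ D := by
      have hsum : x 0 + T n = ∑ i ∈ Finset.range (n+1), x i := by
        rw [Finset.sum_range_succ', hT]
        abel
      rw [hsum]
      exact hD _ (by simp [Finset.nonempty_range_iff])
    obtain ⟨c, hw1, hw2⟩ := exists_block hd e hw
    exact key hd e hu1 hu2 hv1 hv2 hw1 hw2 hab rfl
  · -- not multiplicatively syndetic
    rintro P ⟨F, hF, hcov⟩
    obtain ⟨n, hn⟩ := he (P, F)
    have h1 : (e n).1 = P := by rw [hn]
    have h2 : (e n).2 = F := by rw [hn]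
    have hx := (exists_x hd (e n).1 (e n).2 ((gS hd e n).sup nu)).choose_spec
    obtain ⟨s, hsF, hsA⟩ := hcov (xch hd e (gS hd e n) n) hx.1
    have hmem : (e n).1.mul s (xch hd e (gS hd e n) n) ∈ gS hd e (n+1) := by
      rw [gS_succ, Finset.mem_union]
      right
      exact Finset.mem_image.mpr ⟨s, Finset.mem_filter.mpr ⟨h2 ▸ hsF, hF s hsF⟩, rfl⟩
    have : P.mul s (xch hd e (gS hd e n) n) ∈ D := by
      rw [← h1]
      exact ⟨n+1, hmem⟩
    exact hsA.1 this
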